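/- Let G be a group with a normal subgroup N ≅ C2 × C2 and G/N ≅ A4, such that the conjugation action of G on N induces a nontrivial homomorphism A4 → Aut(N) ≅ S3. Then preimages in G of the commuting involutions of A4 commute with each other, and G is isomorphic to either (C2 × C2) ⋊ A4 or (C4 × C4) ⋊ C3. -/

import Mathlib

set_option maxRecDepth 40000
set_option maxHeartbeats 2000000
set_option synthInstance.maxHeartbeats 1000000
set_option synthInstance.maxSize 512

namespace Stmt15Aux

abbrev A4 : Type := alternatingGroup (Fin 4)
abbrev M2 : Type := Multiplicative (ZMod 2 × ZMod 2)
abbrev X3 : Type := {m : M2 // m ≠ 1}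

-- decidable facts about A4
lemma D1 : ∀ x y : A4, x^2 = 1 → y^2 = 1 → x*y = y*x := by decide
lemma D2 : ∀ x : A4, x^2 = 1 → ∃ y z : A4, x = y*z*y⁻¹*z⁻¹ := by decide
lemma D3 : ∀ x y : A4, x^2 ≠ 1 → y^2 ≠ 1 → ∃ g : A4, g*x*g⁻¹ = y ∨ g*x*g⁻¹ = y⁻¹ := by decide
lemma D4 : ∀ σ x : A4, σ^2 = 1 ∨ x^2 ≠ 1 ∨ σ*x ≠ x*σ ∨ x = 1 := by decide
lemma D5 : ∀ x y : A4, x^2≠1 ∨ y^2≠1 ∨ x=1 ∨ y=1 ∨ x=y ∨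
    ∃ σ:A4, σ^2≠1 ∧ σ*x*σ⁻¹ = y ∧ σ*y*σ⁻¹ = x*y := by decide
lemma D6 : ∀ σ x z : A4, σ^2=1 ∨ x^2≠1 ∨ x=1 ∨ ∃ i : Fin 3,
    z*(σ^(i:ℕ))⁻¹ = 1 ∨ z*(σ^(i:ℕ))⁻¹ = x ∨ z*(σ^(i:ℕ))⁻¹ = σ*x*σ⁻¹ ∨
    z*(σ^(i:ℕ))⁻¹ = x*(σ*x*σ⁻¹) := by decide
lemma D6' : ∀ σ z : A4, σ^2 = 1 ∨ ∃ i : Fin 3, (z*(σ^(i:ℕ))⁻¹)^2 = 1 := by decide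
lemma D7 : ∃ x : A4, x^2 = 1 ∧ x ≠ 1 := by decide
lemma D8 : ∀ σ : A4, σ^2 ≠ 1 → σ^3 = 1 := by decide

lemma M2exp2 : ∀ z : M2, z*z = 1 := by decide

lemma P1 : ∀ p q : Equiv.Perm X3, (p*q*p⁻¹*q⁻¹)^2 = 1 → p*q*p⁻¹*q⁻¹ = 1 := by decide
lemma P2 : ∀ p : Equiv.Perm X3, p^3 = 1 → p ≠ 1 → ∀ t, p t ≠ t := by decide




lemma mulequiv_ne_one {H K : Type*} [Group H] [Group K] (e : H ≃* K) {x : H}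
    (hx : x ≠ 1) : e x ≠ 1 := by
  intro h
  exact hx (by
    have := e.injective (a₁ := x) (a₂ := 1) (by simpa using h)
    simpa using this)

/-- automorphisms of a Klein 4 group act on the 3 nontrivial elements -/
def pi3 {H : Type*} [Group H] (e2 : H ≃* M2) : MulAut H →* Equiv.Perm X3 where
  toFun u := Equiv.Perm.subtypePerm
      (((e2.symm.toEquiv.trans u.toEquiv).trans e2.toEquiv : Equiv.Perm M2)) (by
    intro m
    simp only [Equiv.trans_apply, MulEquiv.coe_toEquiv, ne_eq]
    constructor
    · intro hm h
      exact hm (by simp [h])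
    · intro hm
      exact mulequiv_ne_one e2 (mulequiv_ne_one u (mulequiv_ne_one e2.symm hm)))
  map_one' := by ext t : 2; simp [Equiv.Perm.subtypePerm]
  map_mul' u v := by ext t : 2; simp [Equiv.Perm.subtypePerm]

lemma pi3_apply {H : Type*} [Group H] (e2 : H ≃* M2) (u : MulAut H) (t : X3) :
    (pi3 e2 u t : M2) = e2 (u (e2.symm t.1)) := rfl

lemma pi3_injective {H : Type*} [Group H] (e2 : H ≃* M2) :
    Function.Injective (pi3 e2) := by
  intro u v huv
  ext x
  by_cases hx : x = 1
  · simp [hx]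
  · have := congrArg (fun p : Equiv.Perm X3 => (p ⟨e2 x, mulequiv_ne_one e2 hx⟩ : M2)) huv
    simp only [pi3_apply, MulEquiv.symm_apply_apply] at this
    exact e2.injective this

/-- congruence of semidirect products -/
def sdCongr {N₁ N₂ K₁ K₂ : Type*} [Group N₁] [Group N₂] [Group K₁] [Group K₂]
    (eN : N₁ ≃* N₂) (eK : K₁ ≃* K₂) (φ : K₁ →* MulAut N₁) :
    (N₁ ⋊[φ] K₁) ≃*
      (N₂ ⋊[((MulAut.congr eN).toMonoidHom.comp (φ.comp eK.symm.toMonoidHom))] K₂) where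
  toFun x := ⟨eN x.left, eK x.right⟩
  invFun x := ⟨eN.symm x.left, eK.symm x.right⟩
  left_inv x := by ext <;> simp
  right_inv x := by ext <;> simp
  map_mul' x y := by
    ext
    · simp [MulAut.congr, -SemidirectProduct.mk_eq_inl_mul_inr]
      erw [SemidirectProduct.mul_left]
      simp [MulAut.congr]
    · simp [-SemidirectProduct.mk_eq_inl_mul_inr]
      rfl

/-- splitting from a section -/
noncomputable def splitIso {G K : Type*} [Group G] [Group K] (H : Subgroup G) [H.Normal]
    (s : K →* G) (ha : ∀ k, s k ∈ H → k = 1) (hb : ∀ g, ∃ k, g * (s k)⁻¹ ∈ H) :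
    G ≃* (H ⋊[(MulAut.conjNormal (H := H)).comp s] K) := by
  set φ := (MulAut.conjNormal (H := H)).comp s
  have compat : ∀ k : K, H.subtype.comp (φ k).toMonoidHom
      = (MulAut.conj (s k)).toMonoidHom.comp H.subtype := by
    intro k; ext n; simp [φ]
  set Φ : (H ⋊[φ] K) →* G := SemidirectProduct.lift H.subtype s compat
  have hΦ : ∀ (h : H) (k : K), Φ ⟨h, k⟩ = (h : G) * s k := by
    intro h k
    have : (⟨h, k⟩ : H ⋊[φ] K) = SemidirectProduct.inl h * SemidirectProduct.inr k := by
      ext <;> simp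
    rw [this, map_mul]
    simp [Φ]
  have hinj : Function.Injective Φ := by
    rw [injective_iff_map_eq_one]
    rintro ⟨h, k⟩ hx
    rw [hΦ] at hx
    have hsk : s k = (h : G)⁻¹ := eq_inv_of_mul_eq_one_right hx
    have hk : k = 1 := ha k (hsk ▸ (inv_mem h.2))
    subst hk
    simp only [map_one, mul_one] at hx
    ext <;> simp [hx]
  have hsur : Function.Surjective Φ := by
    intro g
    obtain ⟨k, hk⟩ := hb g
    exact ⟨⟨⟨g * (s k)⁻¹, hk⟩, k⟩, by rw [hΦ]; simp⟩
  exact (MulEquiv.ofBijective Φ ⟨hinj, hsur⟩).symm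

lemma powmod {M : Type*} [Monoid M] (a : M) (k m : ℕ) (h : a^k = 1) :
    a^(m % k) = a^m := by
  conv_rhs => rw [← Nat.div_add_mod m k]
  rw [pow_add, pow_mul, h, one_pow, one_mul]


end Stmt15Aux

open Stmt15Aux in
theorem stmt15 (G : Type) [Group G] (N : Subgroup G) [N.Normal]
    (e2 : N ≃* Multiplicative (ZMod 2 × ZMod 2))
    (eq : (G ⧸ N) ≃* alternatingGroup (Fin 4))
    (hnontriv : ∃ (g : G) (x : N), g * (x : G) * g⁻¹ ≠ (x : G)) :
    (∀ w w' : G,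
      (QuotientGroup.mk' N w) ^ 2 = 1 → QuotientGroup.mk' N w ≠ 1 →
      (QuotientGroup.mk' N w') ^ 2 = 1 → QuotientGroup.mk' N w' ≠ 1 →
      Commute w w') ∧
    ((∃ φ : alternatingGroup (Fin 4) →* MulAut (Multiplicative (ZMod 2 × ZMod 2)),
        Nonempty (G ≃*
          (Multiplicative (ZMod 2 × ZMod 2) ⋊[φ] alternatingGroup (Fin 4)))) ∨
     (∃ φ : Multiplicative (ZMod 3) →* MulAut (Multiplicative (ZMod 4 × ZMod 4)),
        Nonempty (G ≃*
          (Multiplicative (ZMod 4 × ZMod 4) ⋊[φ] Multiplicative (ZMod 3))))) := by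
  classical
  set π' : G →* alternatingGroup (Fin 4) :=
    eq.toMonoidHom.comp (QuotientGroup.mk' N) with hπ'def
  have hπ'surj : Function.Surjective π' := fun a => by
    obtain ⟨q, hq⟩ := eq.surjective a
    obtain ⟨g, hg⟩ := QuotientGroup.mk'_surjective N q
    refine ⟨g, ?_⟩
    rw [hπ'def]
    show eq (QuotientGroup.mk' N g) = a
    rw [hg, hq]
  have hπ'ker : ∀ g : G, π' g = 1 ↔ g ∈ N := by
    intro g
    simp only [hπ'def, MonoidHom.comp_apply, MulEquiv.coe_toMonoidHom]
    rw [MulEquiv.map_eq_one_iff]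
    exact QuotientGroup.eq_one_iff g
  set ψ : G →* MulAut N := MulAut.conjNormal with hψdef
  have hψap : ∀ (g : G) (n : N), ((ψ g n : N) : G) = g * (n : G) * g⁻¹ :=
    fun g n => rfl
  -- N is commutative & exponent 2
  have hNexp2 : ∀ n : N, n * n = 1 := fun n => e2.injective (by
    rw [map_mul, map_one]; exact M2exp2 (e2 n))
  have hNexp2' : ∀ g ∈ N, g * g = 1 := fun g hg => by
    have := hNexp2 ⟨g, hg⟩
    exact congrArg Subtype.val this
  -- N acts trivially on itself
  have hψN : ∀ n ∈ N, ψ n = 1 := by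
    intro n hn
    ext m
    have h1 : (⟨n, hn⟩ : N) * m = m * ⟨n, hn⟩ := by
      have h2 := hNexp2 (⟨n, hn⟩ * m)
      have h3 := hNexp2 ⟨n, hn⟩
      have h4 := hNexp2 m
      calc (⟨n, hn⟩ : N) * m = (⟨n, hn⟩ : N) * ((⟨n, hn⟩ * m) * (⟨n, hn⟩ * m)) * m := by
            rw [h2]; group
        _ = ((⟨n, hn⟩ : N) * ⟨n, hn⟩) * (m * ⟨n, hn⟩) * (m * m) := by group
        _ = m * ⟨n, hn⟩ := by rw [h3, h4]; group
    have : (ψ n m : G) = n * (m : G) * n⁻¹ := hψap n m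
    have h5 : (⟨n, hn⟩ : N) * m * (⟨n, hn⟩ : N)⁻¹ = m := by
      rw [h1]; group
    have h6 : ψ n m = m := by
      apply Subtype.ext
      rw [hψap]
      have := congrArg Subtype.val h5
      push_cast at this ⊢
      convert this using 2
    simpa using h6
  -- involution classes act trivially (uses commutator structure)
  have h2tor_ker : ∀ g : G, (π' g)^2 = 1 → ψ g = 1 := by
    intro g hg2
    obtain ⟨y, z, hyz⟩ := D2 (π' g) hg2
    obtain ⟨b, hb⟩ := hπ'surj y
    obtain ⟨d, hd⟩ := hπ'surj z
    set k := b*d*b⁻¹*d⁻¹ with hk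
    have hπk : π' k = π' g := by
      rw [hk]; simp only [map_mul, map_inv, hb, hd]; rw [hyz]
    have hgk : g * k⁻¹ ∈ N := by
      rw [← hπ'ker]; rw [map_mul, map_inv, hπk]; group
    have hψk1 : ψ k = 1 := by
      apply pi3_injective e2
      rw [map_one]
      have hre : pi3 e2 (ψ b) * pi3 e2 (ψ d) * (pi3 e2 (ψ b))⁻¹ * (pi3 e2 (ψ d))⁻¹
          = pi3 e2 (ψ k) := by
        rw [hk]; simp only [map_mul, map_inv]
      rw [← hre]
      apply P1 (pi3 e2 (ψ b)) (pi3 e2 (ψ d))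
      rw [hre, ← map_pow]
      have hk2 : ψ (k^2) = 1 := by
        have hπk2 : π' (k^2) = 1 := by rw [map_pow, hπk, hg2]
        exact hψN _ ((hπ'ker _).mp hπk2)
      rw [map_pow] at hk2
      rw [hk2, map_one]
    have : ψ g = ψ (g * k⁻¹) * ψ k := by rw [← map_mul]; group
    rw [this, hψk1, hψN _ hgk, one_mul]
  -- elements of order 3 classes act nontrivially
  obtain ⟨g₀, n₀, hg₀⟩ := hnontriv
  have hψg₀ : ψ g₀ ≠ 1 := by
    intro h
    apply hg₀
    have := congrArg (fun u : MulAut N => ((u n₀ : N) : G)) h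
    simpa [hψap] using this
  have hx₀ : (π' g₀)^2 ≠ 1 := fun h => hψg₀ (h2tor_ker _ h)
  have hker3 : ∀ g : G, (π' g)^2 ≠ 1 → ψ g ≠ 1 := by
    intro g hg2 hψg
    obtain ⟨a, ha⟩ := D3 (π' g) (π' g₀) hg2 hx₀
    obtain ⟨t, ht⟩ := hπ'surj a
    apply hψg₀
    rcases ha with ha | ha
    · have hm : (t*g*t⁻¹) * g₀⁻¹ ∈ N := by
        rw [← hπ'ker]
        simp only [map_mul, map_inv, ht, ha]
        group
      have : g₀ = ((t*g*t⁻¹) * g₀⁻¹)⁻¹ * (t * g * t⁻¹) := by group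
      rw [this, map_mul, map_inv, hψN _ hm, inv_one, one_mul]
      simp only [map_mul, map_inv, hψg]
      group
    · have hm : (t*g*t⁻¹) * g₀ ∈ N := by
        rw [← hπ'ker]
        simp only [map_mul, map_inv, ht, ha]
        group
      have : g₀ = (t * g * t⁻¹)⁻¹ * ((t*g*t⁻¹) * g₀) := by group
      rw [this, map_mul, hψN _ hm, mul_one]
      simp only [map_mul, map_inv, hψg]
      group
  -- fixed-point-freeness on N
  have fpfN : ∀ d : G, (π' d)^2 ≠ 1 → ∀ n : N, ψ d n = n → n = 1 := by
    intro d hd2 n hn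
    by_contra hn1
    have hu3 : (ψ d)^3 = 1 := by
      rw [← map_pow]
      apply hψN
      rw [← hπ'ker, map_pow]
      exact D8 _ hd2
    have hp3 : (pi3 e2 (ψ d))^3 = 1 := by rw [← map_pow, hu3, map_one]
    have hpne : pi3 e2 (ψ d) ≠ 1 := by
      intro h
      exact hker3 d hd2 (pi3_injective e2 (by rw [h, map_one]))
    have := P2 _ hp3 hpne ⟨e2 n, mulequiv_ne_one e2 hn1⟩
    apply this
    apply Subtype.ext
    rw [pi3_apply]
    simp only [MulEquiv.symm_apply_apply]
    rw [hn]
  -- finiteness and cardinality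
  have finN : Finite N := Finite.of_equiv _ e2.symm.toEquiv
  have finQ : Finite (G ⧸ N) := Finite.of_equiv _ eq.symm.toEquiv
  have finG : Finite G :=
    Finite.of_equiv _ (Subgroup.groupEquivQuotientProdSubgroup (s := N)).symm
  have hcardN : Nat.card N = 4 := by
    rw [Nat.card_congr e2.toEquiv]
    simp [Nat.card_eq_fintype_card]
  have hcardQ : Nat.card (G ⧸ N) = 12 := by
    rw [Nat.card_congr eq.toEquiv, Nat.card_eq_fintype_card]
    decide
  have hcardG : Nat.card G = 48 := by
    rw [Subgroup.card_eq_card_quotient_mul_card_subgroup N, hcardQ, hcardN]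
  -- an element of order 3
  have : Fintype G := Fintype.ofFinite G
  haveI : Fact (Nat.Prime 3) := ⟨by norm_num⟩
  obtain ⟨c, hc⟩ := exists_prime_orderOf_dvd_card (G := G) 3 (by
    rw [← Nat.card_eq_fintype_card, hcardG]; norm_num)
  have hc3 : c^3 = 1 := by rw [← hc]; exact pow_orderOf_eq_one c
  have hc1 : c ≠ 1 := by
    intro h; rw [h, orderOf_one] at hc; norm_num at hc
  set σ0 : alternatingGroup (Fin 4) := π' c with hσ0def
  have hσ0_3 : σ0^3 = 1 := by rw [hσ0def, ← map_pow, hc3, map_one]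
  have hσ0_2 : σ0^2 ≠ 1 := by
    intro h
    have hσ1 : σ0 = 1 := by
      have h2 : σ0 = σ0^3 * (σ0^2)⁻¹ := by group
      rw [h2, hσ0_3, h]; group
    have hcN : c ∈ N := (hπ'ker c).mp hσ1
    have hcc := hNexp2' c hcN
    apply hc1
    have h3 : c = c^3 * (c*c)⁻¹ := by group
    rw [h3, hc3, hcc]; group
  -- the subgroup H = ker ψ
  have memH : ∀ g : G, g ∈ ψ.ker ↔ (π' g)^2 = 1 := by
    intro g
    constructor
    · intro h
      by_contra h2
      exact hker3 g h2 h
    · exact h2tor_ker g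
  have hNH : ∀ g ∈ N, g ∈ ψ.ker := fun g hg => hψN g hg
  have hcent : ∀ h ∈ ψ.ker, ∀ g ∈ N, h * g * h⁻¹ = g := by
    intro h hh g hg
    have h1 : ψ h ⟨g, hg⟩ = ⟨g, hg⟩ := by rw [hh]; rfl
    have := congrArg Subtype.val h1
    rw [hψap] at this
    exact this
  have hcomm' : ∀ h ∈ ψ.ker, ∀ g ∈ N, h * g = g * h := by
    intro h hh g hg
    have := hcent h hh g hg
    calc h * g = (h * g * h⁻¹) * h := by group
      _ = g * h := by rw [this]
  -- dropping central factors from commutators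
  have hdrop : ∀ p q m m' : G, p ∈ ψ.ker → q ∈ ψ.ker → m ∈ N → m' ∈ N →
      (p*m)*(q*m')*(p*m)⁻¹*(q*m')⁻¹ = p*q*p⁻¹*q⁻¹ := by
    intro p q m m' hp hq hm hm'
    have com1 : Commute q m := hcomm' q hq m hm
    have com2 : Commute m m' := (hcomm' m' (hNH m' hm') m hm).symm
    have com3 : Commute p m' := hcomm' p hp m' hm'
    have cqm' : Commute m (q*m') := (com1.symm).mul_right com2
    have e1 : m*(q*(m'*m⁻¹)) = q*m' := by
      calc m*(q*(m'*m⁻¹)) = (m*(q*m'))*m⁻¹ := by group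
        _ = ((q*m')*m)*m⁻¹ := by rw [cqm'.eq]
        _ = q*m' := by group
    have e3 : m'*p⁻¹ = p⁻¹*m' := (com3.inv_left).eq.symm
    calc (p*m)*(q*m')*(p*m)⁻¹*(q*m')⁻¹
        = p*(m*(q*(m'*m⁻¹)))*p⁻¹*m'⁻¹*q⁻¹ := by group
      _ = p*(q*m')*p⁻¹*m'⁻¹*q⁻¹ := by rw [e1]
      _ = p*q*(m'*p⁻¹)*m'⁻¹*q⁻¹ := by group
      _ = p*q*(p⁻¹*m')*m'⁻¹*q⁻¹ := by rw [e3]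
      _ = p*q*p⁻¹*q⁻¹ := by group
  -- Part 1: lifts of involutions commute
  have hcomm : ∀ a b : G, (π' a)^2 = 1 → π' a ≠ 1 → (π' b)^2 = 1 → π' b ≠ 1 →
      a * b = b * a := by
    intro a b hx2 hx1 hy2 hy1
    rcases D5 (π' a) (π' b) with h | h | h | h | hxy | ⟨σ, hσ2, hσx, hσy⟩
    · exact absurd hx2 h
    · exact absurd hy2 h
    · exact absurd h hx1
    · exact absurd h hy1
    · -- same image: b = m * a with m in N
      have hm : b * a⁻¹ ∈ N := by
        rw [← hπ'ker, map_mul, map_inv, ← hxy]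
        group
      have hcm := hcomm' a ((memH a).mpr hx2) (b*a⁻¹) hm
      calc a * b = (a * (b*a⁻¹)) * a := by group
        _ = ((b*a⁻¹) * a) * a := by rw [hcm]
        _ = b * a := by group
    · -- distinct involutions
      obtain ⟨t, ht⟩ := hπ'surj σ
      set n : G := a*b*a⁻¹*b⁻¹ with hn
      have hnN : n ∈ N := by
        rw [← hπ'ker, hn]
        simp only [map_mul, map_inv]
        have := D1 (π' a) (π' b) hx2 hy2
        rw [this]; group
      have hnn : n * n = 1 := hNexp2' n hnN
      have hninv : n⁻¹ = n := inv_eq_of_mul_eq_one_right hnn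
      have hm₁ : b⁻¹*(t*a*t⁻¹) ∈ N := by
        rw [← hπ'ker]
        simp only [map_mul, map_inv, ht, hσx]
        group
      have hm₂ : (a*b)⁻¹*(t*b*t⁻¹) ∈ N := by
        rw [← hπ'ker]
        simp only [map_mul, map_inv, ht, hσy]
        group
      have haH : a ∈ ψ.ker := (memH a).mpr hx2
      have hbH : b ∈ ψ.ker := (memH b).mpr hy2
      have habH : a*b ∈ ψ.ker := mul_mem haH hbH
      have key : t*n*t⁻¹ = n⁻¹ := by
        calc t*n*t⁻¹ = (t*a*t⁻¹)*(t*b*t⁻¹)*(t*a*t⁻¹)⁻¹*(t*b*t⁻¹)⁻¹ := by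
              rw [hn]; group
          _ = (b*(b⁻¹*(t*a*t⁻¹)))*((a*b)*((a*b)⁻¹*(t*b*t⁻¹)))*
              (b*(b⁻¹*(t*a*t⁻¹)))⁻¹*((a*b)*((a*b)⁻¹*(t*b*t⁻¹)))⁻¹ := by group
          _ = b*(a*b)*b⁻¹*(a*b)⁻¹ := hdrop b (a*b) _ _ hbH habH hm₁ hm₂
          _ = n⁻¹ := by rw [hn]; group
      rw [hninv] at key
      have hfix : ψ t ⟨n, hnN⟩ = ⟨n, hnN⟩ := by
        apply Subtype.ext
        rw [hψap]
        exact key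
      have hπt2 : (π' t)^2 ≠ 1 := by rw [ht]; exact hσ2
      have := fpfN t hπt2 ⟨n, hnN⟩ hfix
      have hn1 : n = 1 := congrArg Subtype.val this
      calc a * b = (a*b*a⁻¹*b⁻¹) * (b * a) := by group
        _ = b * a := by rw [← hn, hn1, one_mul]
  have Habelian : ∀ a ∈ ψ.ker, ∀ b ∈ ψ.ker, a * b = b * a := by
    intro a ha b hb
    by_cases ha1 : π' a = 1
    · exact (hcomm' b hb a ((hπ'ker a).mp ha1)).symm
    by_cases hb1 : π' b = 1
    · exact hcomm' a ha b ((hπ'ker b).mp hb1)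
    exact hcomm a b ((memH a).mp ha) ha1 ((memH b).mp hb) hb1
  have hπc2 : (π' c)^2 ≠ 1 := by rw [← hσ0def]; exact hσ0_2
  have ufix : ∀ h ∈ ψ.ker, c*h*c⁻¹ = h → h = 1 := by
    intro h hh hch
    have hπ : σ0 * π' h = π' h * σ0 := by
      have h2 := congrArg π' hch
      simp only [map_mul, map_inv] at h2
      rw [← hσ0def] at h2
      calc σ0 * π' h = (σ0 * π' h * σ0⁻¹) * σ0 := by group
        _ = π' h * σ0 := by rw [h2]
    have hπh1 : π' h = 1 := by
      rcases D4 σ0 (π' h) with h' | h' | h' | h'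
      · exact absurd h' hσ0_2
      · exact absurd ((memH h).mp hh) h'
      · exact absurd hπ h'
      · exact h'
    have hhN : h ∈ N := (hπ'ker h).mp hπh1
    have hfix : ψ c ⟨h, hhN⟩ = ⟨h, hhN⟩ := Subtype.ext (by rw [hψap]; exact hch)
    exact congrArg Subtype.val (fpfN c hπc2 ⟨h, hhN⟩ hfix)
  have hHc : ∀ h ∈ ψ.ker, c*h*c⁻¹ ∈ ψ.ker := fun h hh =>
    (MonoidHom.normal_ker ψ).conj_mem h hh c
  have hP : ∀ h ∈ ψ.ker, h * (c*h*c⁻¹) * (c*(c*h*c⁻¹)*c⁻¹) = 1 := by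
    intro h hh
    have h1 : c*h*c⁻¹ ∈ ψ.ker := hHc h hh
    have h2 : c*(c*h*c⁻¹)*c⁻¹ ∈ ψ.ker := hHc _ h1
    have hpH : h * (c*h*c⁻¹) * (c*(c*h*c⁻¹)*c⁻¹) ∈ ψ.ker := mul_mem (mul_mem hh h1) h2
    have hcc3 : c*c*c = 1 := by
      have h3 := hc3
      rw [pow_succ, pow_two] at h3
      exact h3
    have hc3' : c*(c*(c*h*c⁻¹)*c⁻¹)*c⁻¹ = h := by
      calc c*(c*(c*h*c⁻¹)*c⁻¹)*c⁻¹ = (c*c*c)*h*(c*c*c)⁻¹ := by group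
        _ = h := by rw [hcc3]; group
    have hcomAB : ((c*h*c⁻¹) * (c*(c*h*c⁻¹)*c⁻¹)) * h = h * ((c*h*c⁻¹) * (c*(c*h*c⁻¹)*c⁻¹)) := by
      have cA : Commute h (c*h*c⁻¹) := Habelian h hh _ h1
      have cB : Commute h (c*(c*h*c⁻¹)*c⁻¹) := Habelian h hh _ h2
      exact (cA.mul_right cB).eq.symm
    have hcp : c*(h * (c*h*c⁻¹) * (c*(c*h*c⁻¹)*c⁻¹))*c⁻¹
        = h * (c*h*c⁻¹) * (c*(c*h*c⁻¹)*c⁻¹) := by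
      calc c*(h * (c*h*c⁻¹) * (c*(c*h*c⁻¹)*c⁻¹))*c⁻¹
          = (c*h*c⁻¹) * (c*(c*h*c⁻¹)*c⁻¹) * (c*(c*(c*h*c⁻¹)*c⁻¹)*c⁻¹) := by group
        _ = ((c*h*c⁻¹) * (c*(c*h*c⁻¹)*c⁻¹)) * h := by rw [hc3']
        _ = h * (c*h*c⁻¹) * (c*(c*h*c⁻¹)*c⁻¹) := by rw [hcomAB]; group
    exact ufix _ hpH hcp
  constructor
  · -- Part 1 : lifts of involutions commute
    intro w w' hw2 hw1 hw'2 hw'1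
    have h1 : (π' w)^2 = 1 := by
      show (eq.toMonoidHom ((QuotientGroup.mk' N) w))^2 = 1
      rw [← map_pow, hw2, map_one]
    have h1' : (π' w')^2 = 1 := by
      show (eq.toMonoidHom ((QuotientGroup.mk' N) w'))^2 = 1
      rw [← map_pow, hw'2, map_one]
    have h2 : π' w ≠ 1 := by
      intro h
      exact hw1 (eq.injective (by rw [map_one]; exact h))
    have h2' : π' w' ≠ 1 := by
      intro h
      exact hw'1 (eq.injective (by rw [map_one]; exact h))
    exact hcomm w w' h1 h2 h1' h2'
  -- Part 2 : classification
  have hcc3 : c*c*c = 1 := by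
    have h3 := hc3
    rw [pow_succ, pow_two] at h3
    exact h3
  have hcinv : c⁻¹ = c*c := by
    apply inv_eq_of_mul_eq_one_right
    rw [← mul_assoc]
    exact hcc3
  by_cases hA : ∀ h ∈ ψ.ker, h * h = 1
  · -- CASE A : exponent 2, G ≅ (C2×C2) ⋊ A4
    obtain ⟨x₁, hx₁2, hx₁1⟩ := D7
    obtain ⟨h₀, hh₀⟩ := hπ'surj x₁
    have hh₀H : h₀ ∈ ψ.ker := (memH h₀).mpr (by rw [hh₀, hx₁2])
    set k₀ : G := c*h₀*c⁻¹ with hk₀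
    have hk₀H : k₀ ∈ ψ.ker := hHc h₀ hh₀H
    have hπk₀ : π' k₀ = σ0 * x₁ * σ0⁻¹ := by
      rw [hk₀]
      simp only [map_mul, map_inv, hh₀, ← hσ0def]
    have hσ0x₁ : σ0 * x₁ ≠ x₁ * σ0 := by
      rcases D4 σ0 x₁ with h' | h' | h' | h'
      · exact absurd h' hσ0_2
      · exact absurd hx₁2 h'
      · exact h'
      · exact absurd h' hx₁1
    have hy1 : σ0 * x₁ * σ0⁻¹ ≠ 1 := by
      intro h
      apply hx₁1
      calc x₁ = σ0⁻¹ * (σ0 * x₁ * σ0⁻¹) * σ0 := by group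
        _ = 1 := by rw [h]; group
    have hy2 : (σ0 * x₁ * σ0⁻¹)^2 = 1 := by
      have : (σ0 * x₁ * σ0⁻¹)^2 = σ0 * x₁^2 * σ0⁻¹ := by rw [pow_two, pow_two]; group
      rw [this, hx₁2]; group
    have hxy : x₁ ≠ σ0 * x₁ * σ0⁻¹ := by
      intro h
      apply hσ0x₁
      calc σ0 * x₁ = (σ0 * x₁ * σ0⁻¹) * σ0 := by group
        _ = x₁ * σ0 := by rw [← h]
    have hh₀2 : h₀ * h₀ = 1 := hA h₀ hh₀H
    have hk₀2 : k₀ * k₀ = 1 := hA k₀ hk₀H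
    have hcomhk : h₀ * k₀ = k₀ * h₀ := Habelian _ hh₀H _ hk₀H
    have hhk2 : (h₀*k₀) * (h₀*k₀) = 1 := hA _ (mul_mem hh₀H hk₀H)
    have hu2 : c*k₀*c⁻¹ = h₀*k₀ := by
      have hX := hP h₀ hh₀H
      rw [← hk₀] at hX
      have hinv : (h₀*k₀)⁻¹ = h₀*k₀ := inv_eq_of_mul_eq_one_right hhk2
      calc c*k₀*c⁻¹ = (h₀*k₀)⁻¹ * (h₀ * k₀ * (c*k₀*c⁻¹)) := by group
        _ = (h₀*k₀)⁻¹ := by rw [hX, mul_one]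
        _ = h₀*k₀ := hinv
    have hu3 : c*(h₀*k₀)*c⁻¹ = h₀ := by
      have : c*(h₀*k₀)*c⁻¹ = (c*h₀*c⁻¹)*(c*k₀*c⁻¹) := by group
      rw [this, ← hk₀, hu2]
      calc k₀*(h₀*k₀) = (k₀*h₀)*k₀ := by group
        _ = (h₀*k₀)*k₀ := by rw [← hcomhk]
        _ = h₀*(k₀*k₀) := by group
        _ = h₀ := by rw [hk₀2, mul_one]
    -- products within S
    have p1 : h₀*(h₀*k₀) = k₀ := by rw [← mul_assoc, hh₀2, one_mul]
    have p3 : k₀*(h₀*k₀) = h₀ := by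
      calc k₀*(h₀*k₀) = (k₀*h₀)*k₀ := by group
        _ = (h₀*k₀)*k₀ := by rw [← hcomhk]
        _ = h₀*(k₀*k₀) := by group
        _ = h₀ := by rw [hk₀2, mul_one]
    have p4 : (h₀*k₀)*h₀ = k₀ := by
      calc (h₀*k₀)*h₀ = h₀*(k₀*h₀) := by group
        _ = h₀*(h₀*k₀) := by rw [← hcomhk]
        _ = k₀ := p1
    have p5 : (h₀*k₀)*k₀ = h₀ := by rw [mul_assoc, hk₀2, mul_one]
    have p2 : k₀*h₀ = h₀*k₀ := hcomhk.symm
    set Sset : Set G := {1, h₀, k₀, h₀*k₀} with hSset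
    have hSmem : ∀ a : G, a ∈ Sset ↔ (a = 1 ∨ a = h₀ ∨ a = k₀ ∨ a = h₀*k₀) := by
      intro a
      simp [hSset, Set.mem_insert_iff, Set.mem_singleton_iff]
    have hSmul : ∀ a ∈ Sset, ∀ b ∈ Sset, a*b ∈ Sset := by
      intro a ha b hb
      rw [hSmem] at ha hb ⊢
      rcases ha with rfl | rfl | rfl | rfl <;> rcases hb with rfl | rfl | rfl | rfl <;>
        simp only [one_mul, mul_one, hh₀2, hk₀2, hhk2, p1, p2, p3, p4, p5] <;> tauto
    have hSsq : ∀ a ∈ Sset, a * a = 1 := by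
      intro a ha
      rw [hSmem] at ha
      rcases ha with rfl | rfl | rfl | rfl
      · rw [mul_one]
      · exact hh₀2
      · exact hk₀2
      · exact hhk2
    have hSconj : ∀ a ∈ Sset, c*a*c⁻¹ ∈ Sset := by
      intro a ha
      rw [hSmem] at ha
      rw [hSmem]
      rcases ha with rfl | rfl | rfl | rfl
      · left; group
      · right; right; left; rw [← hk₀]
      · right; right; right; exact hu2
      · right; left; exact hu3
    have hSconj2 : ∀ a ∈ Sset, c⁻¹*a*c ∈ Sset := by
      intro a ha
      have h1 := hSconj _ (hSconj a ha)
      have h2 : c*(c*a*c⁻¹)*c⁻¹ = c⁻¹*a*c := by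
        calc c*(c*a*c⁻¹)*c⁻¹ = (c*c)*a*(c*c)⁻¹ := by group
          _ = c⁻¹*a*(c⁻¹)⁻¹ := by rw [← hcinv]
          _ = c⁻¹*a*c := by rw [inv_inv]
      rwa [h2] at h1
    set Cset : Set G := {1, c, c*c} with hCset
    have hCmem : ∀ d : G, d ∈ Cset ↔ (d = 1 ∨ d = c ∨ d = c*c) := by
      intro d
      simp [hCset, Set.mem_insert_iff, Set.mem_singleton_iff]
    have hCmul : ∀ d ∈ Cset, ∀ e ∈ Cset, d*e ∈ Cset := by
      intro d hd e he
      rw [hCmem] at hd he ⊢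
      have q1 : c*(c*c) = 1 := by rw [← mul_assoc]; exact hcc3
      have q2 : (c*c)*c = 1 := hcc3
      have q3 : (c*c)*(c*c) = c := by
        calc (c*c)*(c*c) = c*(c*c*c) := by group
          _ = c := by rw [hcc3, mul_one]
      rcases hd with rfl | rfl | rfl <;> rcases he with rfl | rfl | rfl <;>
        simp only [one_mul, mul_one, q1, q2, q3] <;> tauto
    have hCinv : ∀ d ∈ Cset, d⁻¹ ∈ Cset := by
      intro d hd
      rw [hCmem] at hd ⊢
      rcases hd with rfl | rfl | rfl
      · left; group
      · right; right; exact hcinv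
      · right; left
        apply inv_eq_of_mul_eq_one_right
        exact hcc3
    have hCSconj : ∀ d ∈ Cset, ∀ a ∈ Sset, d*a*d⁻¹ ∈ Sset := by
      intro d hd a ha
      rw [hCmem] at hd
      rcases hd with rfl | rfl | rfl
      · simpa using ha
      · exact hSconj a ha
      · have h1 := hSconj _ (hSconj a ha)
        have h2 : c*(c*a*c⁻¹)*c⁻¹ = (c*c)*a*(c*c)⁻¹ := by group
        rwa [h2] at h1
    set KK : Subgroup G := {
      carrier := {g | ∃ a ∈ Sset, ∃ d ∈ Cset, g = a * d},
      one_mem' := ⟨1, by rw [hSmem]; tauto, 1, by rw [hCmem]; tauto, by rw [mul_one]⟩,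
      mul_mem' := by
        rintro g1 g2 ⟨a, ha, d, hd, rfl⟩ ⟨b, hb, e, he, rfl⟩
        refine ⟨a * (d*b*d⁻¹), hSmul a ha _ (hCSconj d hd b hb), d*e, hCmul d hd e he, ?_⟩
        group,
      inv_mem' := by
        rintro g ⟨a, ha, d, hd, rfl⟩
        refine ⟨d⁻¹*a*(d⁻¹)⁻¹, hCSconj d⁻¹ (hCinv d hd) a ha, d⁻¹, hCinv d hd, ?_⟩
        have hainv : a⁻¹ = a := inv_eq_of_mul_eq_one_right (hSsq a ha)
        rw [mul_inv_rev, hainv]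
        group } with hKK
    have hπS : ∀ a ∈ Sset, (π' a)^2 = 1 := by
      intro a ha
      rw [hSmem] at ha
      rcases ha with rfl | rfl | rfl | rfl
      · rw [map_one, one_pow]
      · rw [hh₀, hx₁2]
      · rw [hπk₀, hy2]
      · rw [map_mul, hh₀, hπk₀]
        have hcm := D1 x₁ (σ0 * x₁ * σ0⁻¹) hx₁2 hy2
        calc (x₁ * (σ0 * x₁ * σ0⁻¹))^2
            = x₁ * ((σ0 * x₁ * σ0⁻¹) * x₁) * (σ0 * x₁ * σ0⁻¹) := by rw [pow_two]; group
          _ = x₁ * (x₁ * (σ0 * x₁ * σ0⁻¹)) * (σ0 * x₁ * σ0⁻¹) := by rw [← hcm]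
          _ = x₁^2 * (σ0 * x₁ * σ0⁻¹)^2 := by rw [pow_two, pow_two]; group
          _ = 1 := by rw [hx₁2, hy2, mul_one]
    have hπS1 : ∀ a ∈ Sset, π' a = 1 → a = 1 := by
      intro a ha h1
      rw [hSmem] at ha
      rcases ha with rfl | rfl | rfl | rfl
      · rfl
      · exact absurd (hh₀ ▸ h1) hx₁1
      · exact absurd (hπk₀ ▸ h1) hy1
      · exfalso
        rw [map_mul, hh₀, hπk₀] at h1
        apply hxy
        have hyinv : (σ0 * x₁ * σ0⁻¹)⁻¹ = σ0 * x₁ * σ0⁻¹ := by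
          apply inv_eq_of_mul_eq_one_right
          rw [← pow_two]; exact hy2
        calc x₁ = x₁ * ((σ0 * x₁ * σ0⁻¹) * (σ0 * x₁ * σ0⁻¹)⁻¹) := by group
          _ = (x₁ * (σ0 * x₁ * σ0⁻¹)) * (σ0 * x₁ * σ0⁻¹)⁻¹ := by group
          _ = (σ0 * x₁ * σ0⁻¹)⁻¹ := by rw [h1, one_mul]
          _ = σ0 * x₁ * σ0⁻¹ := hyinv
    have hπC : ∀ d ∈ Cset, π' d = 1 → d = 1 := by
      intro d hd h1
      rw [hCmem] at hd
      rcases hd with rfl | rfl | rfl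
      · rfl
      · exfalso
        apply hσ0_2
        rw [hσ0def, h1, one_pow]
      · exfalso
        apply hσ0_2
        rw [map_mul, ← hσ0def] at h1
        rw [pow_two, h1]
    have hKinj : ∀ g ∈ KK, π' g = 1 → g = 1 := by
      rintro g ⟨a, ha, d, hd, rfl⟩ h1
      rw [map_mul] at h1
      have hd2 : (π' d)^2 = 1 := by
        have h2 : π' d = (π' a)⁻¹ := eq_inv_of_mul_eq_one_right h1
        rw [h2, inv_pow, hπS a ha, inv_one]
      have hd1 : d = 1 := by
        apply hπC d hd
        rw [hCmem] at hd
        rcases hd with rfl | rfl | rfl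
        · rw [map_one]
        · exfalso
          apply hσ0_2
          rw [hσ0def]
          exact hd2
        · exfalso
          apply hσ0_2
          rw [map_mul, ← hσ0def] at hd2
          have hσ4 : (σ0 * σ0)^2 = σ0 := by
            have e : (σ0 * σ0)^2 = σ0^3 * σ0 := by
              rw [← pow_two, ← pow_mul, ← pow_succ]
            rw [e, hσ0_3, one_mul]
          rw [hσ4] at hd2
          rw [hd2, one_pow]
      subst hd1
      rw [map_one, mul_one] at h1
      rw [hπS1 a ha h1, one_mul]
    have hKsur : ∀ z : alternatingGroup (Fin 4), ∃ g ∈ KK, π' g = z := by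
      intro z
      rcases D6 σ0 x₁ z with h' | h' | h' | ⟨i, hi⟩
      · exact absurd h' hσ0_2
      · exact absurd hx₁2 h'
      · exact absurd h' hx₁1
      · have hget : ∀ a ∈ Sset, ∀ d ∈ Cset, π' a = z*(σ0^(i:ℕ))⁻¹ → π' d = σ0^(i:ℕ) →
            ∃ g ∈ KK, π' g = z := by
          intro a ha d hd hπa hπd
          refine ⟨a*d, ⟨a, ha, d, hd, rfl⟩, ?_⟩
          rw [map_mul, hπa, hπd]
          group
        have hd0 : ∃ d ∈ Cset, π' d = σ0^(i:ℕ) := by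
          fin_cases i
          · exact ⟨1, by rw [hCmem]; tauto, by rw [map_one, pow_zero]⟩
          · exact ⟨c, by rw [hCmem]; tauto, by rw [pow_one, hσ0def]⟩
          · exact ⟨c*c, by rw [hCmem]; tauto, by rw [map_mul, ← hσ0def, pow_two]⟩
        obtain ⟨d, hd, hπd⟩ := hd0
        rcases hi with hi | hi | hi | hi
        · exact hget 1 (by rw [hSmem]; tauto) d hd (by rw [map_one, hi]) hπd
        · exact hget h₀ (by rw [hSmem]; tauto) d hd (by rw [hh₀, hi]) hπd
        · exact hget k₀ (by rw [hSmem]; tauto) d hd (by rw [hπk₀, hi]) hπd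
        · exact hget (h₀*k₀) (by rw [hSmem]; tauto) d hd
            (by rw [map_mul, hh₀, hπk₀, hi]) hπd
    -- the complement gives a section
    set π'' : KK →* alternatingGroup (Fin 4) := π'.comp KK.subtype with hπ''
    have hbij : Function.Bijective π'' := by
      constructor
      · rw [injective_iff_map_eq_one]
        rintro ⟨g, hg⟩ h1
        exact Subtype.ext (hKinj g hg h1)
      · intro z
        obtain ⟨g, hg, hπ⟩ := hKsur z
        exact ⟨⟨g, hg⟩, hπ⟩
    set eqK := MulEquiv.ofBijective π'' hbij with heqK
    set s : alternatingGroup (Fin 4) →* G := KK.subtype.comp eqK.symm.toMonoidHom with hs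
    have hsec : ∀ z, π' (s z) = z := by
      intro z
      have h1 : π' (s z) = π'' (eqK.symm z) := rfl
      rw [h1]
      have h2 : π'' (eqK.symm z) = eqK (eqK.symm z) := rfl
      rw [h2, MulEquiv.apply_symm_apply]
    have iso1 := splitIso (G := G) (K := alternatingGroup (Fin 4)) N s
      (fun k hk => by
        have h1 := hsec k
        rw [(hπ'ker (s k)).mpr hk] at h1
        exact h1.symm)
      (fun g => ⟨π' g, by
        rw [← hπ'ker (g * (s (π' g))⁻¹), map_mul, map_inv, hsec]
        group⟩)
    exact Or.inl ⟨_, ⟨iso1.trans (sdCongr e2 (MulEquiv.refl (alternatingGroup (Fin 4))) _)⟩⟩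

  · -- CASE B : some element of H has order 4, G ≅ (C4×C4) ⋊ C3
    push_neg at hA
    obtain ⟨h₁, hh₁H, hh₁2⟩ := hA
    set h₂ : G := c*h₁*c⁻¹ with hh₂
    have hh₂H : h₂ ∈ ψ.ker := hHc h₁ hh₁H
    have hsq : ∀ h ∈ ψ.ker, h*h ∈ N := by
      intro h hh
      rw [← hπ'ker, map_mul, ← pow_two]
      exact (memH h).mp hh
    have hh₁sqN : h₁*h₁ ∈ N := hsq h₁ hh₁H
    have h4 : (h₁*h₁)*(h₁*h₁) = 1 := hNexp2' _ hh₁sqN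
    have hconjsq : h₂*h₂ = c*(h₁*h₁)*c⁻¹ := by rw [hh₂]; group
    have hh₂2 : h₂*h₂ ≠ 1 := by
      intro h
      apply hh₁2
      rw [hconjsq] at h
      calc h₁*h₁ = c⁻¹*(c*(h₁*h₁)*c⁻¹)*c := by group
        _ = 1 := by rw [h]; group
    have hh₂sqN : h₂*h₂ ∈ N := hsq h₂ hh₂H
    have h4' : (h₂*h₂)*(h₂*h₂) = 1 := hNexp2' _ hh₂sqN
    have hkey : h₁*h₁ ≠ h₂*h₂ := by
      intro h
      apply hh₁2
      apply ufix _ (hNH _ hh₁sqN)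
      rw [← hconjsq, ← h]
    -- images in A4
    have hx₂2 : (π' h₁)^2 = 1 := (memH h₁).mp hh₁H
    have hx₂1 : π' h₁ ≠ 1 := by
      intro h
      exact hh₁2 (hNexp2' h₁ ((hπ'ker h₁).mp h))
    have hy₂def : π' h₂ = σ0 * π' h₁ * σ0⁻¹ := by
      rw [hh₂]
      simp only [map_mul, map_inv, ← hσ0def]
    have hy₂2 : (π' h₂)^2 = 1 := (memH h₂).mp hh₂H
    have hy₂1 : π' h₂ ≠ 1 := by
      intro h
      exact hh₂2 (hNexp2' h₂ ((hπ'ker h₂).mp h))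
    have hxy₂ : π' h₁ ≠ π' h₂ := by
      intro h
      rcases D4 σ0 (π' h₁) with h' | h' | h' | h'
      · exact hσ0_2 h'
      · exact h' hx₂2
      · apply h'
        calc σ0 * π' h₁ = (σ0 * π' h₁ * σ0⁻¹) * σ0 := by group
          _ = π' h₁ * σ0 := by rw [← hy₂def, ← h]
      · exact hx₂1 h'
    have hxyne1 : π' h₁ * π' h₂ ≠ 1 := by
      intro h
      apply hxy₂
      have hinv : (π' h₂)⁻¹ = π' h₂ := by
        apply inv_eq_of_mul_eq_one_right
        rw [← pow_two]; exact hy₂2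
      calc π' h₁ = (π' h₁ * π' h₂) * (π' h₂)⁻¹ := by group
        _ = (π' h₂)⁻¹ := by rw [h, one_mul]
        _ = π' h₂ := hinv
    -- cardinality of H
    have hNle : N ≤ ψ.ker := fun g hg => hNH g hg
    set TT : Subgroup (alternatingGroup (Fin 4)) := {
      carrier := {x | x^2 = 1},
      one_mem' := by show (1 : A4)^2 = 1; rw [one_pow],
      mul_mem' := by
        intro x y hx hy
        have hcm := D1 x y hx hy
        show (x*y)^2 = 1
        calc (x*y)^2 = x*(y*x)*y := by rw [pow_two]; group
          _ = x*(x*y)*y := by rw [← hcm]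
          _ = x^2*y^2 := by rw [pow_two, pow_two]; group
          _ = 1 := by rw [hx, hy, mul_one],
      inv_mem' := by
        intro x hx
        show (x⁻¹)^2 = 1
        rw [inv_pow, hx, inv_one] } with hTT
    have hcardT : Nat.card TT = 4 := by
      have h1 : Nat.card TT = Nat.card {x : alternatingGroup (Fin 4) // x^2 = 1} :=
        Nat.card_congr (Equiv.subtypeEquivRight (fun x => Iff.rfl))
      rw [h1, Nat.card_eq_fintype_card]
      decide
    set πH : ψ.ker →* alternatingGroup (Fin 4) := π'.comp ψ.ker.subtype with hπH
    have hrange : πH.range = TT := by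
      ext x
      constructor
      · rintro ⟨⟨g, hg⟩, rfl⟩
        exact (memH g).mp hg
      · intro hx
        obtain ⟨g, hg⟩ := hπ'surj x
        have hgH : g ∈ ψ.ker := (memH g).mpr (by rw [hg]; exact hx)
        exact ⟨⟨g, hgH⟩, hg⟩
    have hkerH : πH.ker = N.subgroupOf ψ.ker := by
      ext ⟨g, hg⟩
      rw [MonoidHom.mem_ker, Subgroup.mem_subgroupOf]
      exact hπ'ker g
    have hcardHH : Nat.card ψ.ker = 16 := by
      have h1 := Subgroup.card_eq_card_quotient_mul_card_subgroup (πH.ker)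
      have h2 : Nat.card (↥ψ.ker ⧸ πH.ker) = 4 := by
        rw [Nat.card_congr (QuotientGroup.quotientKerEquivRange πH).toEquiv,
          Nat.card_congr (MulEquiv.subgroupCongr hrange).toEquiv, hcardT]
      have h3 : Nat.card πH.ker = 4 := by
        rw [Nat.card_congr (MulEquiv.subgroupCongr hkerH).toEquiv,
          Nat.card_congr (Subgroup.subgroupOfEquivOfLe hNle).toEquiv, hcardN]
      rw [h1, h2, h3]
    -- the isomorphism H ≅ C4 × C4
    set h₁' : ψ.ker := ⟨h₁, hh₁H⟩ with hh₁'
    set h₂' : ψ.ker := ⟨h₂, hh₂H⟩ with hh₂'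
    have hcom12 : Commute h₂' h₁' := Subtype.ext (Habelian _ hh₂H _ hh₁H)
    have h₁'4 : h₁'^4 = 1 := by
      apply Subtype.ext
      show h₁^4 = 1
      calc h₁^4 = h₁^2 * h₁^2 := by rw [← pow_add]
        _ = (h₁*h₁)*(h₁*h₁) := by rw [pow_two]
        _ = 1 := h4
    have h₂'4 : h₂'^4 = 1 := by
      apply Subtype.ext
      show h₂^4 = 1
      calc h₂^4 = h₂^2 * h₂^2 := by rw [← pow_add]
        _ = (h₂*h₂)*(h₂*h₂) := by rw [pow_two]
        _ = 1 := h4'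
    set χfun : Multiplicative (ZMod 4 × ZMod 4) → ψ.ker :=
      fun z => h₁'^((Multiplicative.toAdd z).1.val) * h₂'^((Multiplicative.toAdd z).2.val)
      with hχfun
    have hχmul : ∀ z w, χfun (z*w) = χfun z * χfun w := by
      intro z w
      rw [hχfun]
      simp only []
      have e1 : (Multiplicative.toAdd (z*w)).1 = (Multiplicative.toAdd z).1
          + (Multiplicative.toAdd w).1 := rfl
      have e2 : (Multiplicative.toAdd (z*w)).2 = (Multiplicative.toAdd z).2
          + (Multiplicative.toAdd w).2 := rfl
      rw [e1, e2, ZMod.val_add, ZMod.val_add, powmod _ 4 _ h₁'4, powmod _ 4 _ h₂'4]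
      set a := (Multiplicative.toAdd z).1.val
      set b := (Multiplicative.toAdd z).2.val
      set a' := (Multiplicative.toAdd w).1.val
      set b' := (Multiplicative.toAdd w).2.val
      calc h₁'^(a+a') * h₂'^(b+b') = h₁'^a * (h₁'^a' * h₂'^b) * h₂'^b' := by
            rw [pow_add, pow_add]; group
        _ = h₁'^a * (h₂'^b * h₁'^a') * h₂'^b' := by rw [(hcom12.pow_pow b a').eq]
        _ = h₁'^a * h₂'^b * (h₁'^a' * h₂'^b') := by group
    set χ : Multiplicative (ZMod 4 × ZMod 4) →* ψ.ker := MonoidHom.mk' χfun hχmul with hχ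
    have hχinj : Function.Injective χ := by
      rw [injective_iff_map_eq_one]
      intro z hz
      have hz' : h₁'^((Multiplicative.toAdd z).1.val) * h₂'^((Multiplicative.toAdd z).2.val)
          = 1 := hz
      set a := (Multiplicative.toAdd z).1.val with ha
      set b := (Multiplicative.toAdd z).2.val with hb
      have hzG : h₁^a * h₂^b = 1 := by
        have := congrArg Subtype.val hz'
        push_cast at this
        exact this
      have hπz : (π' h₁)^a * (π' h₂)^b = 1 := by
        have := congrArg π' hzG
        simpa only [map_mul, map_pow, map_one] using this
      have hx2' : (π' h₁)^(2:ℕ) = 1 := hx₂2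
      have hy2' : (π' h₂)^(2:ℕ) = 1 := hy₂2
      have hamod : (π' h₁)^(a % 2) = (π' h₁)^a := powmod _ 2 _ hx2'
      have hbmod : (π' h₂)^(b % 2) = (π' h₂)^b := powmod _ 2 _ hy2'
      have haeven : a % 2 = 0 := by
        rcases Nat.mod_two_eq_zero_or_one a with h | h
        · exact h
        · exfalso
          rcases Nat.mod_two_eq_zero_or_one b with h' | h'
          · rw [← hamod, ← hbmod, h, h', pow_one, pow_zero, mul_one] at hπz
            exact hx₂1 hπz
          · rw [← hamod, ← hbmod, h, h', pow_one, pow_one] at hπz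
            exact hxyne1 hπz
      have hbeven : b % 2 = 0 := by
        rcases Nat.mod_two_eq_zero_or_one b with h | h
        · exact h
        · exfalso
          rw [← hamod, ← hbmod, haeven, h, pow_one, pow_zero, one_mul] at hπz
          exact hy₂1 hπz
      have halt : a < 4 := ZMod.val_lt _
      have hblt : b < 4 := ZMod.val_lt _
      have ha02 : a = 0 ∨ a = 2 := by omega
      have hb02 : b = 0 ∨ b = 2 := by omega
      have hinvsq : (h₁*h₁)⁻¹ = h₁*h₁ := inv_eq_of_mul_eq_one_right h4
      rcases ha02 with ha0 | ha2 <;> rcases hb02 with hb0 | hb2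
      · -- z = 1
        have hA0 : (Multiplicative.toAdd z).1 = 0 := (ZMod.val_eq_zero _).mp ha0
        have hB0 : (Multiplicative.toAdd z).2 = 0 := (ZMod.val_eq_zero _).mp hb0
        have : Multiplicative.toAdd z = 0 := Prod.ext hA0 hB0
        calc z = Multiplicative.ofAdd (Multiplicative.toAdd z) := rfl
          _ = Multiplicative.ofAdd 0 := by rw [this]
          _ = 1 := rfl
      · exfalso
        rw [ha0, hb2, pow_zero, one_mul] at hzG
        apply hh₂2
        calc h₂*h₂ = h₂^2 := by rw [pow_two]
          _ = 1 := hzG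
      · exfalso
        rw [ha2, hb0, pow_zero, mul_one] at hzG
        apply hh₁2
        calc h₁*h₁ = h₁^2 := by rw [pow_two]
          _ = 1 := hzG
      · exfalso
        rw [ha2, hb2, pow_two, pow_two] at hzG
        apply hkey
        have h5 : (h₁*h₁)⁻¹ = h₂*h₂ := inv_eq_of_mul_eq_one_right hzG
        rw [← hinvsq]
        exact h5
    have hcard16 : Nat.card (Multiplicative (ZMod 4 × ZMod 4)) = 16 := by
      simp [Nat.card_eq_fintype_card]
    have hbijχ : Function.Bijective χ := by
      rw [Nat.bijective_iff_injective_and_card]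
      exact ⟨hχinj, by rw [hcard16, hcardHH]⟩
    set e_H : Multiplicative (ZMod 4 × ZMod 4) ≃* ψ.ker := MulEquiv.ofBijective χ hbijχ
      with he_H
    -- the section C3 → G
    set s' : Multiplicative (ZMod 3) →* G :=
      MonoidHom.mk' (fun z => c^((Multiplicative.toAdd z).val)) (by
        intro z w
        show c^((Multiplicative.toAdd (z*w)).val)
            = c^((Multiplicative.toAdd z).val) * c^((Multiplicative.toAdd w).val)
        have e1 : Multiplicative.toAdd (z*w) = Multiplicative.toAdd z
            + Multiplicative.toAdd w := rfl
        rw [e1, ZMod.val_add, powmod _ 3 _ hc3, pow_add]) with hs'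
    have hs'ap : ∀ z, s' z = c^((Multiplicative.toAdd z).val) := fun z => rfl
    have hσ0pow : ∀ v : ℕ, π' (c^v) = σ0^v := by
      intro v
      rw [map_pow, ← hσ0def]
    have iso1 := splitIso (G := G) (K := Multiplicative (ZMod 3)) ψ.ker s'
      (by
        intro k hk
        rw [hs'ap] at hk
        set v := (Multiplicative.toAdd k).val with hv
        have hvlt : v < 3 := ZMod.val_lt _
        have hσv : (σ0^v)^2 = 1 := by
          rw [← hσ0pow]
          exact (memH _).mp hk
        have hv0 : v = 0 := by
          by_contra hv0
          interval_cases v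
          · exact hv0 rfl
          · rw [pow_one] at hσv
            exact hσ0_2 hσv
          · apply hσ0_2
            have h5 : (σ0^2)^2 = σ0^3 * σ0 := by
              rw [← pow_mul, ← pow_succ]
            rw [h5, hσ0_3, one_mul] at hσv
            rw [hσv, one_pow]
        have hk0 : Multiplicative.toAdd k = 0 := by
          apply (ZMod.val_eq_zero _).mp
          rw [← hv]
          exact hv0
        calc k = Multiplicative.ofAdd (Multiplicative.toAdd k) := rfl
          _ = Multiplicative.ofAdd 0 := by rw [hk0]
          _ = 1 := rfl)
      (by
        intro g
        rcases D6' σ0 (π' g) with h' | ⟨i, hi⟩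
        · exact absurd h' hσ0_2
        refine ⟨Multiplicative.ofAdd ((i : ℕ) : ZMod 3), ?_⟩
        rw [memH]
        have hval : (((i : ℕ) : ZMod 3)).val = (i : ℕ) :=
          ZMod.val_natCast_of_lt i.isLt
        have hsv : s' (Multiplicative.ofAdd ((i : ℕ) : ZMod 3)) = c^(i:ℕ) := by
          rw [hs'ap]
          have : Multiplicative.toAdd (Multiplicative.ofAdd ((i : ℕ) : ZMod 3))
              = ((i : ℕ) : ZMod 3) := rfl
          rw [this, hval]
        rw [hsv, map_mul, map_inv, hσ0pow]
        exact hi)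
    exact Or.inr ⟨_, ⟨iso1.trans (sdCongr e_H.symm (MulEquiv.refl (Multiplicative (ZMod 3))) _)⟩⟩
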